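/- (Glaeser's inequality.) Let f : ℝ → ℝ be twice continuously differentiable with f(s) ≥ 0 for all s ∈ ℝ, and suppose there is M ≥ 0 with |f''(s)| ≤ M for all s ∈ ℝ. Then f'(s)² ≤ 2M·f(s) for every s ∈ ℝ. -/

import Mathlib

/-- **Glaeser's inequality.** If `f : ℝ → ℝ` is twice continuously differentiable,
nonnegative everywhere, and its second derivative is bounded in absolute value by `M ≥ 0`,
then `(f' s)² ≤ 2 M f s` for every `s`. -/
theorem glaeser_inequality (f : ℝ → ℝ) (hf : ContDiff ℝ 2 f)
    (hnonneg : ∀ s : ℝ, 0 ≤ f s) (M : ℝ) (hM : 0 ≤ M)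
    (hbound : ∀ s : ℝ, |deriv (deriv f) s| ≤ M) :
    ∀ s : ℝ, (deriv f s) ^ 2 ≤ 2 * M * f s := by
  have hdf : Differentiable ℝ f := hf.differentiable two_ne_zero
  have hf1 : ContDiff ℝ 1 (deriv f) :=
    ((contDiff_succ_iff_deriv (n := 1)).mp (by exact_mod_cast hf)).2.2
  have hdf' : Differentiable ℝ (deriv f) := hf1.differentiable one_ne_zero
  have hlip : ∀ a b : ℝ, |deriv f a - deriv f b| ≤ M * |a - b| := by
    intro a b
    have := Convex.norm_image_sub_le_of_norm_deriv_le
      (f := deriv f) (C := M) (s := Set.univ)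
      (fun x _ => hdf' x)
      (fun x _ => by simpa [Real.norm_eq_abs] using hbound x)
      convex_univ (Set.mem_univ b) (Set.mem_univ a)
    simpa [Real.norm_eq_abs] using this
  intro s
  set c := deriv f s with hc
  -- key: ∀ t, f (s+t) ≤ f s + c t + M t²/2
  have key : ∀ t : ℝ, f (s + t) ≤ f s + c * t + M / 2 * t ^ 2 := by
    set h : ℝ → ℝ := fun t => f s + c * t + M / 2 * t ^ 2 - f (s + t) with hh
    have hder : ∀ t : ℝ, HasDerivAt h (c + M * t - deriv f (s + t)) t := by
      intro t
      have h1 : HasDerivAt (fun t : ℝ => f (s + t)) (deriv f (s + t)) t := by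
        have := ((hdf (s + t)).hasDerivAt).comp t ((hasDerivAt_id t).const_add s)
        simpa [Function.comp_def] using this
      have h2 : HasDerivAt (fun t : ℝ => f s + c * t + M / 2 * t ^ 2)
          (c + M * t) t := by
        have := ((hasDerivAt_id t).const_mul c).const_add (f s)
        have h3 : HasDerivAt (fun t : ℝ => M / 2 * t ^ 2) (M / 2 * (2 * t)) t := by
          simpa using (hasDerivAt_pow 2 t).const_mul (M / 2)
        have := this.add h3
        rw [show c + M * t = c * 1 + M / 2 * (2 * t) by ring]; exact this
      exact h2.sub h1
    have hdiff : Differentiable ℝ h := fun t => (hder t).differentiableAt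
    have hderiv : ∀ t, deriv h t = c + M * t - deriv f (s + t) := fun t => (hder t).deriv
    have hmono : MonotoneOn h (Set.Ici (0:ℝ)) := by
      apply monotoneOn_of_deriv_nonneg (convex_Ici 0) hdiff.continuous.continuousOn
        (hdiff.differentiableOn)
      intro t ht
      rw [interior_Ici] at ht
      have := hlip (s + t) s
      rw [hderiv]
      have habs : |t| = t := abs_of_pos ht
      simp only [hc] at *
      have := (abs_le.mp (hlip (s + t) s)).2
      simp [habs] at this
      linarith
    have hanti : AntitoneOn h (Set.Iic (0:ℝ)) := by
      apply antitoneOn_of_deriv_nonpos (convex_Iic 0) hdiff.continuous.continuousOn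
        (hdiff.differentiableOn)
      intro t ht
      rw [interior_Iic] at ht
      rw [hderiv]
      have habs : |t| = -t := abs_of_neg ht
      have := (abs_le.mp (hlip s (s + t))).2
      simp [habs] at this
      linarith
    have h0 : h 0 = 0 := by simp [hh]
    intro t
    have : 0 ≤ h t := by
      rcases le_total 0 t with h' | h'
      · have := hmono Set.self_mem_Ici (Set.mem_Ici.mpr h') h'
        linarith [h0 ▸ this]
      · have := hanti (Set.mem_Iic.mpr h') Set.self_mem_Iic h'
        linarith [h0 ▸ this]
    simp only [hh] at this
    linarith
  rcases eq_or_lt_of_le hM with hM0 | hMpos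
  · -- M = 0: need c = 0
    have hc0 : c = 0 := by
      by_contra hne
      have ht := key (-(f s + 1) / c)
      rw [← hM0] at ht
      have : c * (-(f s + 1) / c) = -(f s + 1) := by field_simp
      rw [this] at ht
      have h2 := hnonneg (s + -(f s + 1) / c)
      nlinarith [ht, h2]
    rw [hc0, ← hM0]; ring_nf; positivity
  · have ht := key (-c / M)
    have hns := hnonneg (s + -c / M)
    have hMne : M ≠ 0 := ne_of_gt hMpos
    have hexp : f s + c * (-c / M) + M / 2 * (-c / M) ^ 2 = f s - c ^ 2 / (2 * M) := by
      field_simp; ring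
    rw [hexp] at ht
    have : c ^ 2 / (2 * M) ≤ f s := by linarith
    calc c ^ 2 = 2 * M * (c ^ 2 / (2 * M)) := by field_simp
    _ ≤ 2 * M * f s := by nlinarith
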